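/- (Escape Lemma) Let X be a set, let S be any collection of self-maps of X, and let M_S be the monoid of self-maps of X generated by S together with the identity map. Suppose F = {Q_1, Q_2, ..., Q_n} is a finite subset of X such that (1) φ(X ∖ F) ⊆ X ∖ F for every φ ∈ S, and (2) for each Q_i ∈ F there exists f_i ∈ M_S with f_i(Q_i) ∉ F. Then there exists a single g ∈ M_S such that g(Q_i) ∉ F for all Q_i ∈ F. -/

import Mathlib

/-!
Statement 9 (The Escape Lemma).

`X` is an arbitrary set (type), `S` a collection of self-maps of `X`, viewed
inside the monoid `Function.End X` of all self-maps under composition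
(`f * g = f ∘ g`, `1 = id`), so that the monoid `M_S` generated by `S` together
with the identity is `Submonoid.closure S`.  `F` is a finite subset of `X`.
-/

theorem escape_lemma {X : Type*} (S : Set (Function.End X))
    (F : Set X) (hF : F.Finite)
    -- (1) the complement of `F` is stable under every map in `S`:
    (h1 : ∀ φ ∈ S, ∀ x : X, x ∉ F → φ x ∉ F)
    -- (2) each point of `F` can be moved out of `F` by some element of `M_S`:
    (h2 : ∀ Q ∈ F, ∃ f ∈ Submonoid.closure S, f Q ∉ F) :
    -- there is a single escape function `g ∈ M_S` for `F`:
    ∃ g ∈ Submonoid.closure S, ∀ Q ∈ F, g Q ∉ F := by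
  -- the complement of F is stable under every element of the closure
  have hstab : ∀ f ∈ Submonoid.closure S, ∀ x : X, x ∉ F → f x ∉ F := by
    intro f hf
    induction hf using Submonoid.closure_induction with
    | mem φ hφ => exact h1 φ hφ
    | one => intro x hx; exact hx
    | mul a b _ _ ha hb =>
        intro x hx
        exact ha _ (hb x hx)
  -- main induction: escape for any finite set A, by induction on |A ∩ F|
  have key : ∀ n : ℕ, ∀ A : Set X, A.Finite → (A ∩ F).ncard ≤ n →
      ∃ g ∈ Submonoid.closure S, ∀ a ∈ A, g a ∉ F := by
    intro n
    induction n with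
    | zero =>
        intro A hA hcard
        refine ⟨1, one_mem _, ?_⟩
        intro a ha
        have hempty : A ∩ F = ∅ := by
          have : (A ∩ F).Finite := hA.inter_of_left F
          rw [← Set.ncard_eq_zero this]
          omega
        intro haF
        have : a ∈ A ∩ F := ⟨ha, haF⟩
        simp [hempty] at this
    | succ n ih =>
        intro A hA hcard
        by_cases hne : (A ∩ F).Nonempty
        · obtain ⟨Q, hQA, hQF⟩ := hne
          obtain ⟨f, hfS, hfQ⟩ := h2 Q hQF
          set B := f '' A with hB
          have hBfin : B.Finite := hA.image _
          have hsub : B ∩ F ⊆ f '' ((A ∩ F) \ {Q}) := by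
            rintro b ⟨⟨a, haA, rfl⟩, hbF⟩
            refine ⟨a, ⟨⟨haA, ?_⟩, ?_⟩, rfl⟩
            · by_contra haF
              exact (hstab f hfS a haF) hbF
            · rintro rfl
              exact absurd hbF hfQ
          have hcard' : (B ∩ F).ncard ≤ n := by
            have h1' : (B ∩ F).ncard ≤ (f '' ((A ∩ F) \ {Q})).ncard :=
              Set.ncard_le_ncard hsub (((hA.inter_of_left F).diff).image _)
            have h2' : (f '' ((A ∩ F) \ {Q})).ncard ≤ ((A ∩ F) \ {Q}).ncard :=
              Set.ncard_image_le ((hA.inter_of_left F).diff)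
            have h3' : ((A ∩ F) \ {Q}).ncard = (A ∩ F).ncard - 1 := by
              rw [Set.ncard_diff_singleton_of_mem (show Q ∈ A ∩ F from ⟨hQA, hQF⟩)]
            have h4' : 1 ≤ (A ∩ F).ncard :=
              (Set.ncard_pos (hA.inter_of_left F)).mpr ⟨Q, hQA, hQF⟩
            omega
          obtain ⟨g', hg'S, hg'⟩ := ih B hBfin hcard'
          refine ⟨g' * f, mul_mem hg'S hfS, ?_⟩
          intro a ha
          exact hg' (f a) ⟨a, ha, rfl⟩
        · refine ⟨1, one_mem _, ?_⟩
          intro a ha haF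
          exact hne ⟨a, ha, haF⟩
  exact key F.ncard F hF (by simp)
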